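/- arXiv:2104.10396 — 5 statements merged into one kernel-verified Lean document; each statement's English description precedes it below -/
import Mathlib

section
/- Let n ≥ 1 and let A be a symmetric doubly stochastic n×n real matrix. Let λ₂, λ_n ∈ ℝ with λ₂ ≤ 1 be such that wᵀAw ≤ λ₂‖w‖² for every w ∈ ℝⁿ with 1ᵀw = 0, and wᵀAw ≥ λ_n‖w‖² for every w ∈ ℝⁿ. Let 0 < η ≤ φ and let Γ = diag(γ₁,…,γₙ) with η ≤ γᵢ ≤ φ for all i, and set T := LΓ(I − A). Then for every v ∈ ℝⁿ with 1ᵀv = 0 and v ≠ 0: η(1 − λ₂)[φ + (n − 1)η]/√(n[φ² + (n − 1)η²]) ≤ ‖Tv‖/‖v‖ ≤ φ(1 − λ_n). -/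
open Finset Matrix

/-- A matrix is doubly stochastic if it has nonnegative entries and all row and
column sums equal to 1. -/
def IsDoublyStochastic {n : ℕ} (A : Matrix (Fin n) (Fin n) ℝ) : Prop :=
  (∀ i j, 0 ≤ A i j) ∧ (∀ i, ∑ j, A i j = 1) ∧ (∀ j, ∑ i, A i j = 1)

/-- The matrix L = I − (1/n)·11ᵀ. -/
noncomputable def Lmat (n : ℕ) : Matrix (Fin n) (Fin n) ℝ :=
  1 - (n : ℝ)⁻¹ • Matrix.of (fun _ _ => (1 : ℝ))

/-- The Euclidean norm of a vector in ℝⁿ. -/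
noncomputable def vnorm {n : ℕ} (v : Fin n → ℝ) : ℝ :=
  Real.sqrt (∑ i, v i ^ 2)

set_option maxHeartbeats 1000000

lemma vnorm_nonneg {n : ℕ} (v : Fin n → ℝ) : 0 ≤ vnorm v := Real.sqrt_nonneg _

lemma vnorm_sq {n : ℕ} (v : Fin n → ℝ) : vnorm v ^ 2 = ∑ i, v i ^ 2 :=
  Real.sq_sqrt (Finset.sum_nonneg fun i _ => sq_nonneg _)

lemma dot_le_vnorm {n : ℕ} (f g : Fin n → ℝ) : f ⬝ᵥ g ≤ vnorm f * vnorm g := by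
  have h := Finset.sum_mul_sq_le_sq_mul_sq Finset.univ f g
  calc f ⬝ᵥ g ≤ |∑ i, f i * g i| := le_abs_self _
    _ = Real.sqrt ((∑ i, f i * g i) ^ 2) := (Real.sqrt_sq_eq_abs _).symm
    _ ≤ Real.sqrt ((∑ i, f i ^ 2) * ∑ i, g i ^ 2) := Real.sqrt_le_sqrt h
    _ = vnorm f * vnorm g := by
        rw [Real.sqrt_mul (Finset.sum_nonneg fun i _ => sq_nonneg _)]; rfl

lemma dot_symm {n : ℕ} (M : Matrix (Fin n) (Fin n) ℝ) (hM : M.IsSymm) (f g : Fin n → ℝ) :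
    f ⬝ᵥ M.mulVec g = g ⬝ᵥ M.mulVec f := by
  simp only [dotProduct, mulVec, Finset.mul_sum]
  rw [Finset.sum_comm]
  refine Finset.sum_congr rfl fun i _ => Finset.sum_congr rfl fun j _ => ?_
  rw [hM.apply i j]; ring

/-- two-sided singular-value-type bounds for T = LΓ(I − A). -/
theorem stmt_1 (n : ℕ) (hn : 1 ≤ n)
    (A : Matrix (Fin n) (Fin n) ℝ) (hAsym : A.IsSymm) (hAds : IsDoublyStochastic A)
    (lam2 lamn : ℝ) (hlam2 : lam2 ≤ 1)
    (hA2 : ∀ w : Fin n → ℝ, ∑ i, w i = 0 → w ⬝ᵥ A.mulVec w ≤ lam2 * ∑ i, w i ^ 2)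
    (hAn : ∀ w : Fin n → ℝ, lamn * ∑ i, w i ^ 2 ≤ w ⬝ᵥ A.mulVec w)
    (η φ : ℝ) (hη : 0 < η) (hηφ : η ≤ φ)
    (γ : Fin n → ℝ) (hγl : ∀ i, η ≤ γ i) (hγu : ∀ i, γ i ≤ φ)
    (v : Fin n → ℝ) (hv1 : ∑ i, v i = 0) (hv0 : v ≠ 0) :
    η * (1 - lam2) * (φ + (n - 1) * η) / Real.sqrt (n * (φ ^ 2 + (n - 1) * η ^ 2)) ≤
        vnorm ((Lmat n * Matrix.diagonal γ * (1 - A)).mulVec v) / vnorm v ∧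
      vnorm ((Lmat n * Matrix.diagonal γ * (1 - A)).mulVec v) / vnorm v ≤ φ * (1 - lamn) := by
  obtain ⟨hA0, hArow, hAcol⟩ := hAds
  have hn0 : (n : ℝ) ≠ 0 := Nat.cast_ne_zero.mpr (by omega)
  have hn1 : (1 : ℝ) ≤ (n : ℝ) := by exact_mod_cast hn
  -- quadratic form of A bounded by 1
  have haq : ∀ w : Fin n → ℝ, w ⬝ᵥ A.mulVec w ≤ ∑ i, w i ^ 2 := by
    intro w
    have h1 : w ⬝ᵥ A.mulVec w = ∑ i, ∑ j, A i j * (w i * w j) := by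
      simp only [dotProduct, mulVec, Finset.mul_sum]
      exact Finset.sum_congr rfl fun i _ => Finset.sum_congr rfl fun j _ => by ring
    rw [h1]
    have h2 : ∑ i, ∑ j, A i j * (w i * w j) ≤
        ∑ i, ∑ j, A i j * ((w i ^ 2 + w j ^ 2) / 2) := by
      refine Finset.sum_le_sum fun i _ => Finset.sum_le_sum fun j _ => ?_
      exact mul_le_mul_of_nonneg_left (by nlinarith [sq_nonneg (w i - w j)]) (hA0 i j)
    refine h2.trans (le_of_eq ?_)
    have h3 : ∀ i : Fin n, ∑ j, A i j * ((w i ^ 2 + w j ^ 2) / 2) =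
        w i ^ 2 / 2 + ∑ j, A i j * (w j ^ 2 / 2) := by
      intro i
      have : ∑ j, A i j * ((w i ^ 2 + w j ^ 2) / 2) =
          (∑ j, A i j) * (w i ^ 2 / 2) + ∑ j, A i j * (w j ^ 2 / 2) := by
        rw [Finset.sum_mul, ← Finset.sum_add_distrib]
        exact Finset.sum_congr rfl fun j _ => by ring
      rw [this, hArow i, one_mul]
    rw [Finset.sum_congr rfl fun i _ => h3 i, Finset.sum_add_distrib, Finset.sum_comm]
    have h4 : ∀ j : Fin n, ∑ i, A i j * (w j ^ 2 / 2) = w j ^ 2 / 2 := by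
      intro j; rw [← Finset.sum_mul, hAcol j, one_mul]
    rw [Finset.sum_congr rfl fun j _ => h4 j, ← Finset.sum_add_distrib]
    exact Finset.sum_congr rfl fun i _ => by ring
  set M : Matrix (Fin n) (Fin n) ℝ := 1 - A with hM
  have hMsym : M.IsSymm := by
    unfold Matrix.IsSymm
    rw [hM, Matrix.transpose_sub, Matrix.transpose_one, hAsym.eq]
  set u : Fin n → ℝ := M.mulVec v with hu
  have hMv : ∀ w : Fin n → ℝ, M.mulVec w = w - A.mulVec w := by
    intro w; rw [hM, Matrix.sub_mulVec, Matrix.one_mulVec]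
  have hq : ∀ w : Fin n → ℝ, w ⬝ᵥ M.mulVec w = (∑ i, w i ^ 2) - w ⬝ᵥ A.mulVec w := by
    intro w
    rw [hMv w, dotProduct_sub]
    congr 1
    simp [dotProduct]
    exact Finset.sum_congr rfl fun i _ => (sq (w i)) ▸ by ring
  have hq0 : ∀ w : Fin n → ℝ, 0 ≤ w ⬝ᵥ M.mulVec w := by
    intro w; rw [hq w]; linarith [haq w]
  have hq1 : ∀ w : Fin n → ℝ, w ⬝ᵥ M.mulVec w ≤ (1 - lamn) * ∑ i, w i ^ 2 := by
    intro w; rw [hq w]; nlinarith [hAn w]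
  -- sums
  have hSv : 0 < ∑ i, v i ^ 2 := by
    rcases (Finset.sum_nonneg fun i (_ : i ∈ Finset.univ) => sq_nonneg (v i)).lt_or_eq with h | h
    · exact h
    · exfalso; apply hv0; funext i
      have := (Finset.sum_eq_zero_iff_of_nonneg fun i _ => sq_nonneg (v i)).mp h.symm i
        (Finset.mem_univ i)
      exact pow_eq_zero_iff (by norm_num) |>.mp this
  have hvnv : 0 < vnorm v := Real.sqrt_pos.mpr hSv
  have hsum_u : ∑ i, u i = 0 := by
    have : ∑ i, u i = (∑ i, v i) - ∑ j, (∑ i, A i j) * v j := by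
      rw [hu, hMv v]
      simp only [Pi.sub_apply, Finset.sum_sub_distrib]
      congr 1
      simp only [mulVec, dotProduct]
      rw [Finset.sum_comm]
      exact Finset.sum_congr rfl fun j _ => by rw [Finset.sum_mul]
    rw [this, hv1]
    simp only [hAcol, one_mul, hv1]
    ring
  -- v ⬝ u lower bound
  have hvu : (1 - lam2) * (∑ i, v i ^ 2) ≤ v ⬝ᵥ u := by
    rw [hu, hq v]; nlinarith [hA2 v hv1]
  have hvnu0 : 0 ≤ vnorm u := vnorm_nonneg u
  have hlb_u : (1 - lam2) * vnorm v ≤ vnorm u := by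
    have h1 : (1 - lam2) * (∑ i, v i ^ 2) ≤ vnorm v * vnorm u :=
      hvu.trans (dot_le_vnorm v u)
    have h2 : (∑ i, v i ^ 2) = vnorm v * vnorm v := by
      rw [← vnorm_sq v]; ring
    rw [h2] at h1
    nlinarith
  -- PSD Cauchy-Schwarz: ‖u‖⁴ ≤ q(v) q(u)
  have hSu : ∑ i, u i ^ 2 = v ⬝ᵥ M.mulVec u := by
    rw [dot_symm M hMsym v u, ← hu]
    simp [dotProduct]
    exact Finset.sum_congr rfl fun i _ => by ring
  have hkeyCS : (∑ i, u i ^ 2) ^ 2 ≤ (v ⬝ᵥ M.mulVec v) * (u ⬝ᵥ M.mulVec u) := by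
    have hpoly : ∀ t : ℝ, 0 ≤ (u ⬝ᵥ M.mulVec u) * (t * t) + (2 * (v ⬝ᵥ M.mulVec u)) * t +
        (v ⬝ᵥ M.mulVec v) := by
      intro t
      have h := hq0 (v + t • u)
      have hexp : (v + t • u) ⬝ᵥ M.mulVec (v + t • u) =
          (u ⬝ᵥ M.mulVec u) * (t * t) + (2 * (v ⬝ᵥ M.mulVec u)) * t + (v ⬝ᵥ M.mulVec v) := by
        simp only [Matrix.mulVec_add, Matrix.mulVec_smul, add_dotProduct, dotProduct_add,
          smul_dotProduct, dotProduct_smul, smul_eq_mul]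
        rw [dot_symm M hMsym u v]
        ring
      rw [hexp] at h
      exact h
    have hd := discrim_le_zero hpoly
    rw [discrim] at hd
    rw [hSu]
    nlinarith
  have hlamn1 : lamn ≤ 1 := by nlinarith [hAn v, haq v]
  have hub_u : vnorm u ≤ (1 - lamn) * vnorm v := by
    have hqv := hq1 v
    have hqu := hq1 u
    have hqv0 := hq0 v
    have hqu0 := hq0 u
    have hSun : 0 ≤ ∑ i, u i ^ 2 := Finset.sum_nonneg fun i _ => sq_nonneg _
    have hmain : ∑ i, u i ^ 2 ≤ (1 - lamn) ^ 2 * ∑ i, v i ^ 2 := by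
      rcases hSun.lt_or_eq with h | h
      · nlinarith
      · rw [← h]; positivity
    calc vnorm u = Real.sqrt (∑ i, u i ^ 2) := rfl
      _ ≤ Real.sqrt ((1 - lamn) ^ 2 * ∑ i, v i ^ 2) := Real.sqrt_le_sqrt hmain
      _ = (1 - lamn) * vnorm v := by
          rw [Real.sqrt_mul (sq_nonneg _), Real.sqrt_sq (by linarith)]; rfl
  -- express Tv
  set g : Fin n → ℝ := fun i => γ i * u i with hg
  set s : ℝ := ∑ i, g i with hs
  have hTv : (Lmat n * Matrix.diagonal γ * (1 - A)).mulVec v =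
      fun i => g i - (n : ℝ)⁻¹ * s := by
    rw [← Matrix.mulVec_mulVec, ← Matrix.mulVec_mulVec, ← hM, ← hu]
    have hd : (Matrix.diagonal γ).mulVec u = g :=
      funext fun i => Matrix.mulVec_diagonal γ u i
    rw [hd]
    funext i
    simp only [Lmat, Matrix.sub_mulVec, Matrix.one_mulVec, Pi.sub_apply,
      Matrix.smul_mulVec, Pi.smul_apply, smul_eq_mul]
    congr 1
    simp [mulVec, dotProduct, hs]
  set T : Fin n → ℝ := fun i => g i - (n : ℝ)⁻¹ * s with hT
  rw [hTv]
  have hST : ∑ i, T i ^ 2 = (∑ i, g i ^ 2) - s ^ 2 / n := by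
    have h1 : ∀ i : Fin n, T i ^ 2 = g i ^ 2 - (2 * (n : ℝ)⁻¹ * s) * g i +
        ((n : ℝ)⁻¹ * s) ^ 2 := fun i => by rw [hT]; ring
    rw [Finset.sum_congr rfl fun i _ => h1 i, Finset.sum_add_distrib,
      Finset.sum_sub_distrib, ← Finset.mul_sum, Finset.sum_const, Finset.card_univ,
      Fintype.card_fin, ← hs]
    rw [nsmul_eq_mul]
    field_simp
    ring
  clear_value T
  clear_value s
  -- u ⬝ T = ∑ γ u²
  have huT : u ⬝ᵥ T = ∑ i, γ i * u i ^ 2 := by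
    simp only [dotProduct, hT]
    have h1 : ∀ i : Fin n, u i * (g i - (n : ℝ)⁻¹ * s) =
        γ i * u i ^ 2 - ((n : ℝ)⁻¹ * s) * u i := by
      intro i; rw [hg]; ring
    rw [Finset.sum_congr rfl fun i _ => h1 i, Finset.sum_sub_distrib, ← Finset.mul_sum,
      hsum_u, mul_zero, sub_zero]
  -- lower bound: η ‖u‖ ≤ ‖T‖
  have hγu2 : η * ∑ i, u i ^ 2 ≤ ∑ i, γ i * u i ^ 2 := by
    rw [Finset.mul_sum]
    exact Finset.sum_le_sum fun i _ => mul_le_mul_of_nonneg_right (hγl i) (sq_nonneg _)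
  have hηuT : η * vnorm u ≤ vnorm T := by
    have h1 : η * (vnorm u * vnorm u) ≤ vnorm u * vnorm T := by
      have := (huT ▸ dot_le_vnorm u T)
      have h2 : (∑ i, u i ^ 2) = vnorm u * vnorm u := by rw [← vnorm_sq u]; ring
      nlinarith [hγu2]
    rcases hvnu0.lt_or_eq with h | h
    · nlinarith
    · rw [← h, mul_zero]; exact vnorm_nonneg T
  -- upper bound: ‖T‖ ≤ φ ‖u‖
  have hub_T : vnorm T ≤ φ * vnorm u := by
    have h1 : ∑ i, T i ^ 2 ≤ φ ^ 2 * ∑ i, u i ^ 2 := by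
      rw [hST]
      have h2 : ∑ i, g i ^ 2 ≤ φ ^ 2 * ∑ i, u i ^ 2 := by
        rw [Finset.mul_sum]
        refine Finset.sum_le_sum fun i _ => ?_
        rw [hg]
        have : (γ i * u i) ^ 2 = γ i ^ 2 * u i ^ 2 := by ring
        rw [this]
        exact mul_le_mul_of_nonneg_right
          (by nlinarith [hγl i, hγu i]) (sq_nonneg _)
      have hsn : 0 ≤ s ^ 2 / (n : ℝ) := by positivity
      linarith
    calc vnorm T = Real.sqrt (∑ i, T i ^ 2) := rfl
      _ ≤ Real.sqrt (φ ^ 2 * ∑ i, u i ^ 2) := Real.sqrt_le_sqrt h1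
      _ = φ * vnorm u := by
          rw [Real.sqrt_mul (sq_nonneg _), Real.sqrt_sq (by linarith)]; rfl
  constructor
  · -- lower bound
    rw [le_div_iff₀ hvnv]
    have hstep : η * (1 - lam2) * vnorm v ≤ vnorm T := by
      calc η * (1 - lam2) * vnorm v = η * ((1 - lam2) * vnorm v) := by ring
        _ ≤ η * vnorm u := mul_le_mul_of_nonneg_left hlb_u (le_of_lt hη)
        _ ≤ vnorm T := hηuT
    have hD : 0 < Real.sqrt ((n : ℝ) * (φ ^ 2 + ((n : ℝ) - 1) * η ^ 2)) := by
      apply Real.sqrt_pos.mpr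
      have hφ : 0 < φ := lt_of_lt_of_le hη hηφ
      have h1 : (0 : ℝ) ≤ (n : ℝ) * (((n : ℝ) - 1) * η ^ 2) := by
        apply mul_nonneg (by linarith)
        exact mul_nonneg (by linarith) (sq_nonneg η)
      have h2 : (0 : ℝ) ≤ ((n : ℝ) - 1) * φ ^ 2 :=
        mul_nonneg (by linarith) (sq_nonneg φ)
      nlinarith [mul_pos hφ hφ]
    have hfrac : η * (1 - lam2) * (φ + ((n : ℝ) - 1) * η) /
        Real.sqrt ((n : ℝ) * (φ ^ 2 + ((n : ℝ) - 1) * η ^ 2)) ≤ η * (1 - lam2) := by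
      rw [div_le_iff₀ hD]
      have hle : φ + ((n : ℝ) - 1) * η ≤
          Real.sqrt ((n : ℝ) * (φ ^ 2 + ((n : ℝ) - 1) * η ^ 2)) := by
        have hnn : 0 ≤ φ + ((n : ℝ) - 1) * η := by nlinarith
        rw [show φ + ((n : ℝ) - 1) * η = Real.sqrt ((φ + ((n : ℝ) - 1) * η) ^ 2) from
          (Real.sqrt_sq hnn).symm]
        apply Real.sqrt_le_sqrt
        nlinarith [mul_nonneg (sub_nonneg.mpr hn1) (sq_nonneg (φ - η))]
      calc η * (1 - lam2) * (φ + ((n : ℝ) - 1) * η)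
          ≤ η * (1 - lam2) * Real.sqrt ((n : ℝ) * (φ ^ 2 + ((n : ℝ) - 1) * η ^ 2)) := by
            apply mul_le_mul_of_nonneg_left hle
            have : 0 ≤ 1 - lam2 := by linarith
            positivity
        _ = η * (1 - lam2) * Real.sqrt ((n : ℝ) * (φ ^ 2 + ((n : ℝ) - 1) * η ^ 2)) := rfl
    calc η * (1 - lam2) * (φ + ((n : ℝ) - 1) * η) /
        Real.sqrt ((n : ℝ) * (φ ^ 2 + ((n : ℝ) - 1) * η ^ 2)) * vnorm v
        ≤ η * (1 - lam2) * vnorm v := mul_le_mul_of_nonneg_right hfrac (le_of_lt hvnv)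
      _ ≤ vnorm T := hstep
  · -- upper bound
    rw [div_le_iff₀ hvnv]
    calc vnorm T ≤ φ * vnorm u := hub_T
      _ ≤ φ * ((1 - lamn) * vnorm v) :=
          mul_le_mul_of_nonneg_left hub_u (by linarith)
      _ = φ * (1 - lamn) * vnorm v := by ring
end

section
/- Let n ≥ 1, let W(0), W(1), … be n×n doubly stochastic matrices, let f₁,…,f_n : ℝ → ℝ be differentiable, let d, x(0) ∈ ℝⁿ and α, β ∈ ℝ, and define sequences x, y : ℕ → ℝⁿ by y(0) = x(0) − d, x(k+1) = x(k) − αy(k) − β(I − W(k))∇f(x(k)) and y(k+1) = W(k)y(k) + x(k+1) − x(k). Then for every k ≥ 0: 1ᵀx(k) − 1ᵀd = (1 − α)ᵏ (1ᵀx(0) − 1ᵀd). -/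
open Finset Matrix

lemma sum_mulVec_of_colsum {n : ℕ} (A : Matrix (Fin n) (Fin n) ℝ)
    (hA : ∀ j, ∑ i, A i j = 1) (v : Fin n → ℝ) :
    ∑ i, A.mulVec v i = ∑ i, v i := by
  simp only [mulVec, dotProduct]
  rw [Finset.sum_comm]
  simp_rw [← Finset.sum_mul, hA, one_mul]

/-- geometric decay of the total deviation 1ᵀx(k) − 1ᵀd along the
algorithm. -/
theorem stmt_8 (n : ℕ) (hn : 1 ≤ n)
    (W : ℕ → Matrix (Fin n) (Fin n) ℝ) (hW : ∀ k, IsDoublyStochastic (W k))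
    (f : Fin n → ℝ → ℝ) (hf : ∀ i, Differentiable ℝ (f i))
    (d : Fin n → ℝ) (α β : ℝ)
    (x y : ℕ → Fin n → ℝ)
    (hy0 : y 0 = x 0 - d)
    (hxrec : ∀ k, x (k + 1) =
      x k - α • y k - β • ((1 - W k).mulVec (fun i => deriv (f i) (x k i))))
    (hyrec : ∀ k, y (k + 1) = (W k).mulVec (y k) + x (k + 1) - x k) :
    ∀ k, ∑ i, x k i - ∑ i, d i = (1 - α) ^ k * (∑ i, x 0 i - ∑ i, d i) := by
  have key : ∀ k, (∑ i, x k i - ∑ i, d i = (1 - α) ^ k * (∑ i, x 0 i - ∑ i, d i))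
      ∧ (∑ i, y k i = ∑ i, x k i - ∑ i, d i) := by
    intro k
    induction k with
    | zero => simp [hy0, Finset.sum_sub_distrib]
    | succ k ih =>
      obtain ⟨ih1, ih2⟩ := ih
      have hcol := (hW k).2.2
      have hIW : ∑ i, ((1 - W k).mulVec (fun i => deriv (f i) (x k i))) i = 0 := by
        have : ∀ j, ∑ i, (1 - W k) i j = 0 := by
          intro j
          simp [Matrix.sub_apply, Finset.sum_sub_distrib, hcol j, Matrix.one_apply,
            Finset.sum_ite_eq]
        simp only [mulVec, dotProduct]
        rw [Finset.sum_comm]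
        simp_rw [← Finset.sum_mul, this, zero_mul, Finset.sum_const_zero]
      have hx1 : ∑ i, x (k + 1) i = ∑ i, x k i - α * ∑ i, y k i := by
        rw [hxrec k]
        simp only [Pi.sub_apply, Pi.smul_apply, smul_eq_mul, Finset.sum_sub_distrib,
          ← Finset.mul_sum, hIW]
        ring
      constructor
      · rw [hx1, ih2, pow_succ, mul_comm ((1-α)^k), mul_assoc, ← ih1]
        ring
      · have hy1 : ∑ i, y (k + 1) i = ∑ i, y k i + ∑ i, x (k+1) i - ∑ i, x k i := by
          rw [hyrec k]
          simp only [Pi.add_apply, Pi.sub_apply, Finset.sum_sub_distrib,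
            Finset.sum_add_distrib, sum_mulVec_of_colsum (W k) hcol]
        rw [hy1, hx1, ih2]; ring
  exact fun k => (key k).1
end

section
/- Let s₁, s₂ ∈ [0, 1), c₁, c₂ ≥ 0 with c₁c₂ < (1 − s₁)(1 − s₂), let m₀ ≥ 0 and q₀ ∈ (0, 1), and let a, b : ℕ → [0, ∞) be sequences satisfying a(k+1) ≤ s₁a(k) + c₁b(k) + m₀q₀ᵏ and b(k+1) ≤ s₂b(k) + c₂a(k) + m₀q₀ᵏ for every k ≥ 0. Then there exist m > 0 and q ∈ (0, 1) such that a(k) ≤ mqᵏ and b(k) ≤ mqᵏ for every k ≥ 0. -/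
set_option maxHeartbeats 2000000 in
/-- coupled small-gain recursion lemma for two sequences. -/
theorem stmt_9 (s₁ s₂ c₁ c₂ m₀ q₀ : ℝ)
    (hs₁ : 0 ≤ s₁) (hs₁' : s₁ < 1) (hs₂ : 0 ≤ s₂) (hs₂' : s₂ < 1)
    (hc₁ : 0 ≤ c₁) (hc₂ : 0 ≤ c₂) (hgain : c₁ * c₂ < (1 - s₁) * (1 - s₂))
    (hm₀ : 0 ≤ m₀) (hq₀ : 0 < q₀) (hq₀' : q₀ < 1)
    (a b : ℕ → ℝ) (ha : ∀ k, 0 ≤ a k) (hb : ∀ k, 0 ≤ b k)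
    (hra : ∀ k, a (k + 1) ≤ s₁ * a k + c₁ * b k + m₀ * q₀ ^ k)
    (hrb : ∀ k, b (k + 1) ≤ s₂ * b k + c₂ * a k + m₀ * q₀ ^ k) :
    ∃ m : ℝ, 0 < m ∧ ∃ q : ℝ, 0 < q ∧ q < 1 ∧
      ∀ k, a k ≤ m * q ^ k ∧ b k ≤ m * q ^ k := by
  -- find ρ < 1 close enough to 1
  have hcont : Continuous (fun ρ : ℝ => (ρ - s₁) * (ρ - s₂) - c₁ * c₂) := by continuity
  have hopen : IsOpen {x : ℝ | 0 < (x - s₁) * (x - s₂) - c₁ * c₂} :=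
    isOpen_lt continuous_const hcont
  have hmem : (1 : ℝ) ∈ {x : ℝ | 0 < (x - s₁) * (x - s₂) - c₁ * c₂} := by
    simp only [Set.mem_setOf_eq]; linarith
  obtain ⟨δ, hδ, hball⟩ := Metric.isOpen_iff.mp hopen 1 hmem
  set m₁ : ℝ := max (max s₁ s₂) q₀ with hm₁def
  have hm₁1 : m₁ < 1 := by
    simp only [hm₁def, max_lt_iff]; exact ⟨⟨hs₁', hs₂'⟩, hq₀'⟩
  set ρ : ℝ := max ((1 + m₁) / 2) (1 - δ / 2) with hρdef
  have hρ1 : ρ < 1 := by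
    simp only [hρdef, max_lt_iff]; constructor <;> linarith
  have hρm₁ : m₁ < ρ := by
    have : m₁ < (1 + m₁) / 2 := by linarith
    exact lt_of_lt_of_le this (le_max_left _ _)
  have hρs₁ : s₁ < ρ := lt_of_le_of_lt (le_trans (le_max_left _ _) (le_max_left _ _)) hρm₁
  have hρs₂ : s₂ < ρ := lt_of_le_of_lt (le_trans (le_max_right _ _) (le_max_left _ _)) hρm₁
  have hρq : q₀ < ρ := lt_of_le_of_lt (le_max_right _ _) hρm₁
  have hρball : ρ ∈ Metric.ball (1 : ℝ) δ := by
    have h1 : 1 - δ / 2 ≤ ρ := le_max_right _ _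
    simp only [Metric.mem_ball, Real.dist_eq]
    rw [abs_sub_lt_iff]; constructor <;> linarith
  have hg : c₁ * c₂ < (ρ - s₁) * (ρ - s₂) := by
    have := hball hρball
    simp only [Set.mem_setOf_eq] at this; linarith
  have hρ0 : 0 < ρ := lt_trans hq₀ hρq
  -- choose the weight t
  obtain ⟨t, ht, ht1, ht2⟩ : ∃ t : ℝ, 0 < t ∧ s₁ + t * c₂ ≤ ρ ∧ c₁ ≤ t * (ρ - s₂) := by
    rcases eq_or_lt_of_le hc₂ with hc₂0 | hc₂0
    · refine ⟨(c₁ + 1) / (ρ - s₂), div_pos (by linarith) (by linarith), ?_, ?_⟩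
      · rw [← hc₂0]; linarith
      · rw [div_mul_cancel₀]; · linarith
        · linarith
    · refine ⟨(ρ - s₁) / c₂, div_pos (by linarith) hc₂0, ?_, ?_⟩
      · rw [div_mul_cancel₀]; · linarith
        · linarith
      · rw [div_mul_eq_mul_div, le_div_iff₀ hc₂0]
        nlinarith
  set M : ℝ := (1 + t) * m₀ with hMdef
  have hM0 : 0 ≤ M := by positivity
  set E : ℝ := M / (ρ - q₀) with hEdef
  have hE0 : 0 ≤ E := div_nonneg hM0 (by linarith)
  have hE : E * (ρ - q₀) = M := div_mul_cancel₀ _ (by linarith)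
  set D : ℝ := (a 0 + t * b 0) + E with hDdef
  have hD0 : 0 ≤ D := by
    have := ha 0; have := hb 0; nlinarith
  have key : ∀ k, a k + t * b k ≤ D * ρ ^ k - E * q₀ ^ k := by
    intro k
    induction k with
    | zero => simp [hDdef]
    | succ k ih =>
      have h1 := hra k
      have h2 := hrb k
      have hak := ha k
      have hbk := hb k
      have hqk : (0 : ℝ) ≤ q₀ ^ k := by positivity
      have hρk : (0 : ℝ) ≤ ρ ^ k := by positivity
      have step : a (k + 1) + t * b (k + 1) ≤ ρ * (a k + t * b k) + M * q₀ ^ k := by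
        nlinarith [mul_le_mul_of_nonneg_left h2 ht.le,
          mul_le_mul_of_nonneg_right ht1 hak,
          mul_le_mul_of_nonneg_right ht2 hbk]
      have step2 : ρ * (a k + t * b k) ≤ ρ * (D * ρ ^ k - E * q₀ ^ k) :=
        mul_le_mul_of_nonneg_left ih hρ0.le
      calc a (k + 1) + t * b (k + 1)
          ≤ ρ * (D * ρ ^ k - E * q₀ ^ k) + M * q₀ ^ k := by linarith
        _ = D * ρ ^ (k + 1) - E * q₀ ^ (k + 1) := by linear_combination (-(q₀ ^ k)) * hE
  have h1t : (0:ℝ) < 1 + 1 / t := by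
    have := one_div_pos.mpr ht; linarith
  refine ⟨(D + 1) * (1 + 1 / t), mul_pos (by linarith) h1t, ρ, hρ0, hρ1, fun k => ?_⟩
  have hk := key k
  have hak := ha k
  have hbk := hb k
  have hqk : (0 : ℝ) ≤ q₀ ^ k := by positivity
  have hρk : (0 : ℝ) ≤ ρ ^ k := by positivity
  have hVa : a k ≤ D * ρ ^ k := by nlinarith
  have hVb : t * b k ≤ D * ρ ^ k := by nlinarith
  constructor
  · have hcoef : D ≤ (D + 1) * (1 + 1 / t) := by
      have h1 : (0:ℝ) < 1 / t := by positivity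
      nlinarith [mul_pos (show (0:ℝ) < D + 1 by linarith) h1]
    exact le_trans hVa (mul_le_mul_of_nonneg_right hcoef hρk)
  · have hb' : b k ≤ D / t * ρ ^ k := by
      rw [div_mul_eq_mul_div, le_div_iff₀ ht]
      nlinarith
    have hcoef : D / t ≤ (D + 1) * (1 + 1 / t) := by
      rw [div_le_iff₀ ht]
      have h1 : 0 < 1 / t := by positivity
      nlinarith [mul_pos ht h1, (div_mul_cancel₀ (1:ℝ) ht.ne').symm]
    exact le_trans hb' (mul_le_mul_of_nonneg_right hcoef hρk)
end

section
/- Let s₁, s₂, s₃ ∈ [0, 1) and let c₁₂, c₁₃, c₂₁, c₂₃, c₃₁, c₃₂ ≥ 0. Suppose there exist m₁, m₂, m₃ > 0 such that c₁₂m₂ + c₁₃m₃ < (1 − s₁)m₁, c₂₁m₁ + c₂₃m₃ < (1 − s₂)m₂, and c₃₁m₁ + c₃₂m₂ < (1 − s₃)m₃. If a, b, c : ℕ → [0, ∞) satisfy a(k+1) ≤ s₁a(k) + c₁₂b(k) + c₁₃c(k), b(k+1) ≤ s₂b(k) + c₂₁a(k) + c₂₃c(k), and c(k+1) ≤ s₃c(k)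 + c₃₁a(k) + c₃₂b(k) for every k ≥ 0, then there exist M > 0 and q ∈ (0, 1) such that a(k) ≤ Mqᵏ, b(k) ≤ Mqᵏ, and c(k) ≤ Mqᵏ for every k ≥ 0. -/
/-- three-sequence coupled small-gain recursion lemma. -/
theorem stmt_17 (s₁ s₂ s₃ c₁₂ c₁₃ c₂₁ c₂₃ c₃₁ c₃₂ : ℝ)
    (hs₁ : 0 ≤ s₁) (hs₁' : s₁ < 1) (hs₂ : 0 ≤ s₂) (hs₂' : s₂ < 1)
    (hs₃ : 0 ≤ s₃) (hs₃' : s₃ < 1)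
    (hc₁₂ : 0 ≤ c₁₂) (hc₁₃ : 0 ≤ c₁₃) (hc₂₁ : 0 ≤ c₂₁)
    (hc₂₃ : 0 ≤ c₂₃) (hc₃₁ : 0 ≤ c₃₁) (hc₃₂ : 0 ≤ c₃₂)
    (hm : ∃ m₁ m₂ m₃ : ℝ, 0 < m₁ ∧ 0 < m₂ ∧ 0 < m₃ ∧
      c₁₂ * m₂ + c₁₃ * m₃ < (1 - s₁) * m₁ ∧
      c₂₁ * m₁ + c₂₃ * m₃ < (1 - s₂) * m₂ ∧
      c₃₁ * m₁ + c₃₂ * m₂ < (1 - s₃) * m₃)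
    (a b c : ℕ → ℝ) (ha : ∀ k, 0 ≤ a k) (hb : ∀ k, 0 ≤ b k) (hc : ∀ k, 0 ≤ c k)
    (hra : ∀ k, a (k + 1) ≤ s₁ * a k + c₁₂ * b k + c₁₃ * c k)
    (hrb : ∀ k, b (k + 1) ≤ s₂ * b k + c₂₁ * a k + c₂₃ * c k)
    (hrc : ∀ k, c (k + 1) ≤ s₃ * c k + c₃₁ * a k + c₃₂ * b k) :
    ∃ M : ℝ, 0 < M ∧ ∃ q : ℝ, 0 < q ∧ q < 1 ∧
      ∀ k, a k ≤ M * q ^ k ∧ b k ≤ M * q ^ k ∧ c k ≤ M * q ^ k := by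
  obtain ⟨m₁, m₂, m₃, hm₁, hm₂, hm₃, h1, h2, h3⟩ := hm
  set W : ℕ → ℝ := fun k => max (a k / m₁) (max (b k / m₂) (c k / m₃)) with hW
  set q : ℝ := max (1/2) (max ((s₁ * m₁ + c₁₂ * m₂ + c₁₃ * m₃) / m₁)
      (max ((s₂ * m₂ + c₂₁ * m₁ + c₂₃ * m₃) / m₂)
           ((s₃ * m₃ + c₃₁ * m₁ + c₃₂ * m₂) / m₃))) with hq
  have hq0 : 0 < q := lt_of_lt_of_le (by norm_num) (le_max_left _ _)
  have hq1 : q < 1 := by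
    apply max_lt (by norm_num)
    apply max_lt
    · rw [div_lt_one hm₁]; linarith
    apply max_lt
    · rw [div_lt_one hm₂]; linarith
    · rw [div_lt_one hm₃]; linarith
  have hWnn : ∀ k, 0 ≤ W k := fun k =>
    le_trans (div_nonneg (ha k) hm₁.le) (le_max_left _ _)
  have haW : ∀ k, a k ≤ m₁ * W k := by
    intro k
    have := le_max_left (a k / m₁) (max (b k / m₂) (c k / m₃))
    calc a k = m₁ * (a k / m₁) := by field_simp
    _ ≤ m₁ * W k := by exact mul_le_mul_of_nonneg_left this hm₁.le
  have hbW : ∀ k, b k ≤ m₂ * W k := by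
    intro k
    have := le_trans (le_max_left (b k / m₂) (c k / m₃)) (le_max_right (a k / m₁) _)
    calc b k = m₂ * (b k / m₂) := by field_simp
    _ ≤ m₂ * W k := by exact mul_le_mul_of_nonneg_left this hm₂.le
  have hcW : ∀ k, c k ≤ m₃ * W k := by
    intro k
    have := le_trans (le_max_right (b k / m₂) (c k / m₃)) (le_max_right (a k / m₁) _)
    calc c k = m₃ * (c k / m₃) := by field_simp
    _ ≤ m₃ * W k := by exact mul_le_mul_of_nonneg_left this hm₃.le
  -- ratio bounds
  have hr1 : s₁ * m₁ + c₁₂ * m₂ + c₁₃ * m₃ ≤ q * m₁ := by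
    have : (s₁ * m₁ + c₁₂ * m₂ + c₁₃ * m₃) / m₁ ≤ q :=
      le_trans (le_max_left _ _) (le_max_right _ _)
    calc s₁ * m₁ + c₁₂ * m₂ + c₁₃ * m₃
        = ((s₁ * m₁ + c₁₂ * m₂ + c₁₃ * m₃) / m₁) * m₁ := by field_simp
      _ ≤ q * m₁ := mul_le_mul_of_nonneg_right this hm₁.le
  have hr2 : s₂ * m₂ + c₂₁ * m₁ + c₂₃ * m₃ ≤ q * m₂ := by
    have : (s₂ * m₂ + c₂₁ * m₁ + c₂₃ * m₃) / m₂ ≤ q :=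
      le_trans (le_trans (le_max_left _ _) (le_max_right _ _)) (le_max_right _ _)
    calc s₂ * m₂ + c₂₁ * m₁ + c₂₃ * m₃
        = ((s₂ * m₂ + c₂₁ * m₁ + c₂₃ * m₃) / m₂) * m₂ := by field_simp
      _ ≤ q * m₂ := mul_le_mul_of_nonneg_right this hm₂.le
  have hr3 : s₃ * m₃ + c₃₁ * m₁ + c₃₂ * m₂ ≤ q * m₃ := by
    have : (s₃ * m₃ + c₃₁ * m₁ + c₃₂ * m₂) / m₃ ≤ q :=
      le_trans (le_trans (le_max_right _ _) (le_max_right _ _)) (le_max_right _ _)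
    calc s₃ * m₃ + c₃₁ * m₁ + c₃₂ * m₂
        = ((s₃ * m₃ + c₃₁ * m₁ + c₃₂ * m₂) / m₃) * m₃ := by field_simp
      _ ≤ q * m₃ := mul_le_mul_of_nonneg_right this hm₃.le
  have hWstep : ∀ k, W (k + 1) ≤ q * W k := by
    intro k
    have ha' : a (k + 1) ≤ q * m₁ * W k := by
      calc a (k + 1) ≤ s₁ * a k + c₁₂ * b k + c₁₃ * c k := hra k
        _ ≤ s₁ * (m₁ * W k) + c₁₂ * (m₂ * W k) + c₁₃ * (m₃ * W k) := by
            have u1 := mul_le_mul_of_nonneg_left (haW k) hs₁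
            have u2 := mul_le_mul_of_nonneg_left (hbW k) hc₁₂
            have u3 := mul_le_mul_of_nonneg_left (hcW k) hc₁₃
            linarith
        _ = (s₁ * m₁ + c₁₂ * m₂ + c₁₃ * m₃) * W k := by ring
        _ ≤ q * m₁ * W k := mul_le_mul_of_nonneg_right hr1 (hWnn k)
    have hb' : b (k + 1) ≤ q * m₂ * W k := by
      calc b (k + 1) ≤ s₂ * b k + c₂₁ * a k + c₂₃ * c k := hrb k
        _ ≤ s₂ * (m₂ * W k) + c₂₁ * (m₁ * W k) + c₂₃ * (m₃ * W k) := by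
            have u1 := mul_le_mul_of_nonneg_left (hbW k) hs₂
            have u2 := mul_le_mul_of_nonneg_left (haW k) hc₂₁
            have u3 := mul_le_mul_of_nonneg_left (hcW k) hc₂₃
            linarith
        _ = (s₂ * m₂ + c₂₁ * m₁ + c₂₃ * m₃) * W k := by ring
        _ ≤ q * m₂ * W k := mul_le_mul_of_nonneg_right hr2 (hWnn k)
    have hc' : c (k + 1) ≤ q * m₃ * W k := by
      calc c (k + 1) ≤ s₃ * c k + c₃₁ * a k + c₃₂ * b k := hrc k
        _ ≤ s₃ * (m₃ * W k) + c₃₁ * (m₁ * W k) + c₃₂ * (m₂ * W k) := by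
            have u1 := mul_le_mul_of_nonneg_left (hcW k) hs₃
            have u2 := mul_le_mul_of_nonneg_left (haW k) hc₃₁
            have u3 := mul_le_mul_of_nonneg_left (hbW k) hc₃₂
            linarith
        _ = (s₃ * m₃ + c₃₁ * m₁ + c₃₂ * m₂) * W k := by ring
        _ ≤ q * m₃ * W k := mul_le_mul_of_nonneg_right hr3 (hWnn k)
    have e1 : a (k + 1) / m₁ ≤ q * W k := by
      rw [div_le_iff₀ hm₁]; linarith [ha']
    have e2 : b (k + 1) / m₂ ≤ q * W k := by
      rw [div_le_iff₀ hm₂]; linarith [hb']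
    have e3 : c (k + 1) / m₃ ≤ q * W k := by
      rw [div_le_iff₀ hm₃]; linarith [hc']
    exact max_le e1 (max_le e2 e3)
  have hWk : ∀ k, W k ≤ W 0 * q ^ k := by
    intro k
    induction k with
    | zero => simp
    | succ n ih =>
      calc W (n + 1) ≤ q * W n := hWstep n
        _ ≤ q * (W 0 * q ^ n) := mul_le_mul_of_nonneg_left ih hq0.le
        _ = W 0 * q ^ (n + 1) := by ring
  refine ⟨(m₁ + m₂ + m₃) * (W 0 + 1), mul_pos (by linarith) (by linarith [hWnn 0]), q, hq0, hq1, fun k => ?_⟩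
  have hM : ∀ m, 0 < m → m ≤ m₁ + m₂ + m₃ →
      m * W k ≤ (m₁ + m₂ + m₃) * (W 0 + 1) * q ^ k := by
    intro m hmp hmle
    calc m * W k ≤ m * (W 0 * q ^ k) := mul_le_mul_of_nonneg_left (hWk k) hmp.le
      _ ≤ (m₁ + m₂ + m₃) * (W 0 + 1) * q ^ k := by
          have hqk : (0:ℝ) ≤ q ^ k := by positivity
          have : m * W 0 ≤ (m₁ + m₂ + m₃) * (W 0 + 1) := by nlinarith [hWnn 0]
          nlinarith
  exact ⟨le_trans (haW k) (hM m₁ hm₁ (by linarith)),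
    le_trans (hbW k) (hM m₂ hm₂ (by linarith)),
    le_trans (hcW k) (hM m₃ hm₃ (by linarith))⟩
end

section
/- Let n ≥ 1 and let W be a random n×n real matrix on a probability space, measurable and entrywise integrable, which is almost surely symmetric and doubly stochastic and whose diagonal entries are almost surely strictly positive (Wᵢᵢ > 0 a.s. for every i). If ‖E[W] − (1/n)·11ᵀ‖ < 1, then ‖E[W²] − (1/n)·11ᵀ‖ < 1, where E[·] denotes entrywise expectation and ‖·‖ is the operator norm induced by the Euclidean norm on ℝⁿ (so that for these symmetric matrices it equals the spectral radius). -/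
open Finset Matrix MeasureTheory

namespace Stmt19
variable {n : ℕ}

noncomputable def Jmat (n : ℕ) : Matrix (Fin n) (Fin n) ℝ :=
  (n : ℝ)⁻¹ • Matrix.of (fun _ _ => (1 : ℝ))

lemma Jmat_apply (i j : Fin n) : Jmat n i j = (n : ℝ)⁻¹ := by simp [Jmat]

lemma mulVec_const (A : Matrix (Fin n) (Fin n) ℝ) (hrow : ∀ i, ∑ j, A i j = 1) (c : ℝ) :
    A *ᵥ (fun _ => c) = fun _ => c := by
  funext i
  simp [mulVec, dotProduct, ← Finset.sum_mul, hrow i]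

lemma Jmat_mulVec (x : Fin n → ℝ) : Jmat n *ᵥ x = fun _ => (n : ℝ)⁻¹ * ∑ j, x j := by
  funext i
  simp [Jmat, mulVec, dotProduct, Finset.mul_sum]

lemma ds_sumsq_le (A : Matrix (Fin n) (Fin n) ℝ) (hds : IsDoublyStochastic A)
    (y : Fin n → ℝ) : ∑ i, (A *ᵥ y) i ^ 2 ≤ ∑ j, y j ^ 2 := by
  obtain ⟨hpos, hrow, hcol⟩ := hds
  have key : ∀ i, (A *ᵥ y) i ^ 2 ≤ ∑ j, A i j * y j ^ 2 := by
    intro i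
    have cs := Finset.sum_sq_le_sum_mul_sum_of_sq_eq_mul Finset.univ
      (r := fun j => A i j * y j) (f := fun j => A i j) (g := fun j => A i j * y j ^ 2)
      (fun j _ => hpos i j) (fun j _ => mul_nonneg (hpos i j) (sq_nonneg _))
      (fun j _ => by ring)
    simpa [mulVec, dotProduct, hrow i] using cs
  calc ∑ i, (A *ᵥ y) i ^ 2 ≤ ∑ i, ∑ j, A i j * y j ^ 2 := Finset.sum_le_sum fun i _ => key i
    _ = ∑ j, y j ^ 2 := by
        rw [Finset.sum_comm]
        refine Finset.sum_congr rfl fun j _ => ?_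
        rw [← Finset.sum_mul, hcol j, one_mul]

-- orthogonal projection complement bound
lemma proj_sumsq_le (hn : 1 ≤ n) (x : Fin n → ℝ) :
    ∑ i, (x i - (Jmat n *ᵥ x) i) ^ 2 ≤ ∑ i, x i ^ 2 := by
  have hn0 : (n : ℝ) ≠ 0 := Nat.cast_ne_zero.mpr (by omega)
  set c : ℝ := (n : ℝ)⁻¹ * ∑ j, x j with hc
  have hJ : ∀ i, (Jmat n *ᵥ x) i = c := by rw [Jmat_mulVec]; intro i; rfl
  have hsum : ∑ j, x j = n * c := by
    rw [hc, ← mul_assoc, mul_inv_cancel₀ hn0, one_mul]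
  have expand : ∑ i, (x i - c) ^ 2 = ∑ i, x i ^ 2 - n * c ^ 2 := by
    have : ∑ i, (x i - c) ^ 2 = ∑ i, (x i ^ 2 - 2 * c * x i + c ^ 2) := by
      refine Finset.sum_congr rfl fun i _ => by ring
    rw [this, Finset.sum_add_distrib, Finset.sum_sub_distrib, ← Finset.mul_sum, hsum]
    simp [Finset.card_univ]
    ring
  simp only [hJ, expand]
  have hnpos : (0:ℝ) < n := by exact_mod_cast (by omega : 0 < n)
  nlinarith [sq_nonneg c]

-- norm contraction of W - J
lemma A_sumsq_le (hn : 1 ≤ n) (Wm : Matrix (Fin n) (Fin n) ℝ) (hds : IsDoublyStochastic Wm)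
    (x : Fin n → ℝ) : ∑ i, ((Wm - Jmat n) *ᵥ x) i ^ 2 ≤ ∑ i, x i ^ 2 := by
  have hfix : Wm *ᵥ (Jmat n *ᵥ x) = Jmat n *ᵥ x := by
    rw [Jmat_mulVec]; exact mulVec_const Wm hds.2.1 _
  have : (Wm - Jmat n) *ᵥ x = Wm *ᵥ (x - Jmat n *ᵥ x) := by
    rw [Matrix.mulVec_sub, Matrix.sub_mulVec, hfix]
  rw [this]
  calc ∑ i, (Wm *ᵥ (x - Jmat n *ᵥ x)) i ^ 2 ≤ ∑ i, (x - Jmat n *ᵥ x) i ^ 2 :=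
        ds_sumsq_le Wm hds _
    _ ≤ ∑ i, x i ^ 2 := by simpa using proj_sumsq_le hn x

-- no -1 eigenvalue
lemma no_neg_one (hn : 1 ≤ n) (Wm : Matrix (Fin n) (Fin n) ℝ) (hds : IsDoublyStochastic Wm)
    (hd : ∀ i, 0 < Wm i i) (v : Fin n → ℝ) (hv : Wm *ᵥ v = -v) : v = 0 := by
  obtain ⟨hpos, hrow, hcol⟩ := hds
  obtain ⟨i, -, hi⟩ := Finset.exists_max_image Finset.univ (fun j => v j ^ 2)
    ⟨⟨0, by omega⟩, Finset.mem_univ _⟩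
  have habs : ∀ j, |v j| ≤ |v i| := by
    intro j
    have h := hi j (Finset.mem_univ j)
    nlinarith [sq_abs (v j), sq_abs (v i), abs_nonneg (v j), abs_nonneg (v i)]
  have hterm : ∀ j, 0 ≤ Wm i j * (v j * v i + v i ^ 2) := by
    intro j
    refine mul_nonneg (hpos i j) ?_
    have h1 : -(v j * v i) ≤ |v j| * |v i| := by
      rw [← abs_mul]; exact neg_le_abs _
    have h2 : |v j| * |v i| ≤ |v i| * |v i| :=
      mul_le_mul_of_nonneg_right (habs j) (abs_nonneg _)
    nlinarith [abs_mul_abs_self (v i)]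
  have hS : ∑ j, Wm i j * (v j * v i + v i ^ 2) = 0 := by
    have h1 : ∑ j, Wm i j * (v j * v i) = -(v i ^ 2) := by
      have := congrFun hv i
      simp only [mulVec, dotProduct, Pi.neg_apply] at this
      calc ∑ j, Wm i j * (v j * v i) = (∑ j, Wm i j * v j) * v i := by
            rw [Finset.sum_mul]; exact Finset.sum_congr rfl fun j _ => by ring
        _ = -v i * v i := by rw [this]
        _ = -(v i ^ 2) := by ring
    have h2 : ∑ j, Wm i j * v i ^ 2 = v i ^ 2 := by
      rw [← Finset.sum_mul, hrow i, one_mul]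
    calc ∑ j, Wm i j * (v j * v i + v i ^ 2)
        = ∑ j, (Wm i j * (v j * v i) + Wm i j * v i ^ 2) :=
          Finset.sum_congr rfl fun j _ => by ring
      _ = 0 := by rw [Finset.sum_add_distrib, h1, h2]; ring
  have hsingle : Wm i i * (v i * v i + v i ^ 2) ≤ 0 := by
    rw [← hS]
    exact Finset.single_le_sum (fun j _ => hterm j) (Finset.mem_univ i)
  have hvi : v i = 0 := by
    have h2 : v i ^ 2 ≤ 0 := by nlinarith [hd i, sq_nonneg (v i)]
    have := le_antisymm h2 (sq_nonneg _)
    exact pow_eq_zero_iff (n := 2) (by norm_num) |>.mp this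
  funext j
  have := hi j (Finset.mem_univ j)
  rw [hvi] at this
  simpa using pow_eq_zero_iff (n := 2) (by norm_num) |>.mp (le_antisymm (by simpa using this) (sq_nonneg _))


-- bridging lemmas
lemma clm_apply (A : Matrix (Fin n) (Fin n) ℝ) (x : EuclideanSpace ℝ (Fin n)) (i : Fin n) :
    (Matrix.toEuclideanCLM (𝕜 := ℝ) A x) i = (A *ᵥ x) i := rfl

lemma inner_eq_dot (x y : EuclideanSpace ℝ (Fin n)) :
    (inner ℝ x y : ℝ) = (x : Fin n → ℝ) ⬝ᵥ y := by
  simp [PiLp.inner_apply, dotProduct, RCLike.inner_apply, mul_comm]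

lemma norm_sq_eq (x : EuclideanSpace ℝ (Fin n)) : ‖x‖ ^ 2 = ∑ i, x i ^ 2 := by
  rw [← real_inner_self_eq_norm_sq, inner_eq_dot]
  simp [dotProduct, pow_two]

lemma clm_inner (A : Matrix (Fin n) (Fin n) ℝ) (x y : EuclideanSpace ℝ (Fin n)) :
    (inner ℝ (Matrix.toEuclideanCLM (𝕜 := ℝ) A x) y : ℝ) = (A *ᵥ (x : Fin n → ℝ)) ⬝ᵥ y := by
  rw [inner_eq_dot]; rfl

lemma clm_norm_sq (A : Matrix (Fin n) (Fin n) ℝ) (x : EuclideanSpace ℝ (Fin n)) :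
    ‖Matrix.toEuclideanCLM (𝕜 := ℝ) A x‖ ^ 2 = ∑ i, (A *ᵥ (x : Fin n → ℝ)) i ^ 2 := by
  rw [norm_sq_eq]; rfl

-- contraction in CLM form
lemma A_clm_norm_le (hn : 1 ≤ n) (Wm : Matrix (Fin n) (Fin n) ℝ) (hds : IsDoublyStochastic Wm)
    (x : EuclideanSpace ℝ (Fin n)) :
    ‖Matrix.toEuclideanCLM (𝕜 := ℝ) (Wm - Jmat n) x‖ ≤ ‖x‖ := by
  have h := A_sumsq_le hn Wm hds x
  rw [← clm_norm_sq, ← norm_sq_eq] at h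
  nlinarith [norm_nonneg (Matrix.toEuclideanCLM (𝕜 := ℝ) (Wm - Jmat n) x), norm_nonneg x]

-- Cauchy-Schwarz squaring trick
lemma sq_fix (T : EuclideanSpace ℝ (Fin n) →L[ℝ] EuclideanSpace ℝ (Fin n))
    (hsym : ∀ x y, (inner ℝ (T x) y : ℝ) = inner ℝ x (T y))
    (hle : ∀ z, ‖T z‖ ≤ ‖z‖) (x : EuclideanSpace ℝ (Fin n)) (hx : ‖T x‖ = ‖x‖) :
    T (T x) = x := by
  have h1 : (inner ℝ (T (T x)) x : ℝ) = ‖x‖ ^ 2 := by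
    rw [hsym (T x) x]
    rw [real_inner_comm]
    calc (inner ℝ (T x) (T x) : ℝ) = ‖T x‖ ^ 2 := real_inner_self_eq_norm_sq _
      _ = ‖x‖ ^ 2 := by rw [hx]
  have h2 : ‖T (T x)‖ ≤ ‖x‖ := (hle _).trans (by rw [hx])
  have h3 : ‖T (T x) - x‖ ^ 2 ≤ 0 := by
    rw [norm_sub_sq_real, h1]
    nlinarith [norm_nonneg (T (T x)), norm_nonneg x]
  have h4 : T (T x) - x = 0 := by
    have := le_antisymm h3 (sq_nonneg _)
    have h5 : ‖T (T x) - x‖ = 0 := by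
      exact pow_eq_zero_iff (n := 2) (by norm_num) |>.mp this
    exact norm_eq_zero.mp h5
  linear_combination (norm := abel) h4


lemma Jmat_symm : (Jmat n)ᵀ = Jmat n := by
  ext i j; simp [Jmat, Matrix.transpose_apply]

lemma symm_inner (A : Matrix (Fin n) (Fin n) ℝ) (hA : Aᵀ = A)
    (x y : EuclideanSpace ℝ (Fin n)) :
    (inner ℝ (Matrix.toEuclideanCLM (𝕜 := ℝ) A x) y : ℝ)
      = inner ℝ x (Matrix.toEuclideanCLM (𝕜 := ℝ) A y) := by
  rw [clm_inner, real_inner_comm, clm_inner]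
  calc (A *ᵥ (x : Fin n → ℝ)) ⬝ᵥ (y : Fin n → ℝ)
      = (Aᵀ *ᵥ (x : Fin n → ℝ)) ⬝ᵥ (y : Fin n → ℝ) := by rw [hA]
    _ = ((x : Fin n → ℝ) ᵥ* A) ⬝ᵥ (y : Fin n → ℝ) := by rw [Matrix.mulVec_transpose]
    _ = (x : Fin n → ℝ) ⬝ᵥ (A *ᵥ (y : Fin n → ℝ)) := by rw [Matrix.dotProduct_mulVec]
    _ = (A *ᵥ (y : Fin n → ℝ)) ⬝ᵥ (x : Fin n → ℝ) := by rw [dotProduct_comm]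

lemma Jmat_mul_A (Wm : Matrix (Fin n) (Fin n) ℝ) (hcol : ∀ j, ∑ i, Wm i j = 1) :
    Jmat n * (Wm - Jmat n) = 0 := by
  rcases Nat.eq_zero_or_pos n with h0 | hpos
  · subst h0; ext i j; exact absurd i.2 (by omega)
  have hn0 : (n : ℝ) ≠ 0 := Nat.cast_ne_zero.mpr (by omega)
  ext i j
  simp only [Matrix.mul_apply, Matrix.sub_apply, Jmat_apply, Matrix.zero_apply]
  rw [← Finset.mul_sum, Finset.sum_sub_distrib, hcol j]
  simp [Finset.card_univ]
  field_simp
  norm_num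

lemma fix_of_norm_eq (hn : 1 ≤ n) (Wm : Matrix (Fin n) (Fin n) ℝ) (hsymm : Wm.IsSymm)
    (hds : IsDoublyStochastic Wm) (hd : ∀ i, 0 < Wm i i)
    (u : EuclideanSpace ℝ (Fin n)) (hJu : Jmat n *ᵥ (u : Fin n → ℝ) = 0)
    (hu : ‖Matrix.toEuclideanCLM (𝕜 := ℝ) (Wm - Jmat n) u‖ = ‖u‖) :
    (Wm - Jmat n) *ᵥ (u : Fin n → ℝ) = u := by
  set A := Wm - Jmat n with hA
  have hAsym : Aᵀ = A := by
    rw [hA, Matrix.transpose_sub, Jmat_symm, hsymm.eq]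
  have hT2 : Matrix.toEuclideanCLM (𝕜 := ℝ) A (Matrix.toEuclideanCLM (𝕜 := ℝ) A u) = u :=
    sq_fix _ (symm_inner A hAsym) (fun z => A_clm_norm_le hn Wm hds z) u hu
  have hA2 : A *ᵥ (A *ᵥ (u : Fin n → ℝ)) = u := by
    funext i
    exact congrFun (congrArg (fun (z : EuclideanSpace ℝ (Fin n)) => (z : Fin n → ℝ)) hT2) i
  set uf : Fin n → ℝ := fun i => u i with huf
  have hA2' : A *ᵥ (A *ᵥ uf) = uf := hA2
  have hJu' : Jmat n *ᵥ uf = 0 := hJu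
  set v : Fin n → ℝ := uf - A *ᵥ uf with hv
  have hAv : A *ᵥ v = -v := by
    rw [hv, Matrix.mulVec_sub, hA2']
    abel
  have hJv : Jmat n *ᵥ v = 0 := by
    rw [hv, Matrix.mulVec_sub, hJu', Matrix.mulVec_mulVec, Jmat_mul_A Wm hds.2.2]
    simp
  have hWv : Wm *ᵥ v = -v := by
    have h5 : Wm *ᵥ v = A *ᵥ v + Jmat n *ᵥ v := by
      rw [hA, Matrix.sub_mulVec]; abel
    rw [h5, hAv, hJv, add_zero]
  have hv0 : v = 0 := no_neg_one hn Wm hds hd v hWv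
  exact (sub_eq_zero.mp hv0).symm


-- more matrix algebra
lemma mul_Jmat (hn : 1 ≤ n) (B : Matrix (Fin n) (Fin n) ℝ) (hrow : ∀ i, ∑ j, B i j = 1) :
    B * Jmat n = Jmat n := by
  ext i j
  simp only [Matrix.mul_apply, Jmat_apply]
  rw [← Finset.sum_mul, hrow i, one_mul]

lemma Jmat_mul (hn : 1 ≤ n) (B : Matrix (Fin n) (Fin n) ℝ) (hcol : ∀ j, ∑ i, B i j = 1) :
    Jmat n * B = Jmat n := by
  ext i j
  simp only [Matrix.mul_apply, Jmat_apply]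
  rw [← Finset.mul_sum, hcol j, mul_one]

lemma Jmat_mul_Jmat (hn : 1 ≤ n) : Jmat n * Jmat n = Jmat n := by
  have hn0 : (n : ℝ) ≠ 0 := Nat.cast_ne_zero.mpr (by omega)
  ext i j
  simp only [Matrix.mul_apply, Jmat_apply]
  simp [Finset.card_univ]
  field_simp

lemma A_sq (hn : 1 ≤ n) (Wm : Matrix (Fin n) (Fin n) ℝ) (hds : IsDoublyStochastic Wm) :
    (Wm - Jmat n) * (Wm - Jmat n) = Wm * Wm - Jmat n := by
  rw [Matrix.sub_mul, Matrix.mul_sub, Matrix.mul_sub, mul_Jmat hn Wm hds.2.1,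
    Jmat_mul hn Wm hds.2.2, Jmat_mul_Jmat hn]
  abel

lemma dot_sym (A : Matrix (Fin n) (Fin n) ℝ) (hA : Aᵀ = A) (x y : Fin n → ℝ) :
    (A *ᵥ x) ⬝ᵥ (A *ᵥ y) = ((A * A) *ᵥ x) ⬝ᵥ y := by
  rw [Matrix.dotProduct_mulVec, ← Matrix.mulVec_transpose, hA, Matrix.mulVec_mulVec]

-- colum sums of a product of DS matrix
lemma colsum_sq (Wm : Matrix (Fin n) (Fin n) ℝ) (hds : IsDoublyStochastic Wm) (j : Fin n) :
    ∑ i, (Wm * Wm) i j = 1 := by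
  simp only [Matrix.mul_apply]
  rw [Finset.sum_comm]
  calc ∑ k, ∑ i, Wm i k * Wm k j = ∑ k, (∑ i, Wm i k) * Wm k j := by
        simp [Finset.sum_mul]
    _ = ∑ k, Wm k j := by
        refine Finset.sum_congr rfl fun k _ => by rw [hds.2.2 k, one_mul]
    _ = 1 := hds.2.2 j

section Integrals
variable {Ω : Type} [MeasurableSpace Ω] (μ : MeasureTheory.Measure Ω)

lemma integrable_mulVec_dot (F : Ω → Matrix (Fin n) (Fin n) ℝ)
    (hint : ∀ i j, Integrable (fun ω => F ω i j) μ) (x y : Fin n → ℝ) :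
    Integrable (fun ω => ((F ω) *ᵥ x) ⬝ᵥ y) μ := by
  have expand : ∀ (B : Matrix (Fin n) (Fin n) ℝ),
      (B *ᵥ x) ⬝ᵥ y = ∑ i, ∑ j, B i j * x j * y i := by
    intro B
    simp [dotProduct, mulVec, Finset.sum_mul]
  simp only [expand]
  exact MeasureTheory.integrable_finset_sum _ fun i _ =>
    MeasureTheory.integrable_finset_sum _ fun j _ => ((hint i j).mul_const _).mul_const _

lemma integral_mulVec_dot (F : Ω → Matrix (Fin n) (Fin n) ℝ)
    (hint : ∀ i j, Integrable (fun ω => F ω i j) μ) (x y : Fin n → ℝ) :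
    ∫ ω, ((F ω) *ᵥ x) ⬝ᵥ y ∂μ = ((Matrix.of fun i j => ∫ ω, F ω i j ∂μ) *ᵥ x) ⬝ᵥ y := by
  have expand : ∀ (B : Matrix (Fin n) (Fin n) ℝ),
      (B *ᵥ x) ⬝ᵥ y = ∑ i, ∑ j, B i j * x j * y i := by
    intro B
    simp [dotProduct, mulVec, Finset.sum_mul]
  simp only [expand, Matrix.of_apply]
  rw [integral_finset_sum _ (fun i _ => MeasureTheory.integrable_finset_sum _
    fun j _ => ((hint i j).mul_const _).mul_const _)]
  refine Finset.sum_congr rfl fun i _ => ?_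
  rw [integral_finset_sum _ (fun j _ => ((hint i j).mul_const _).mul_const _)]
  refine Finset.sum_congr rfl fun j _ => ?_
  rw [integral_mul_const, integral_mul_const]

end Integrals

end Stmt19

open Stmt19 in
/-- if the mean network is connected (‖E[W] − (1/n)11ᵀ‖ < 1),
then so is the network associated with E[W²]. -/
theorem stmt_19 (n : ℕ) (hn : 1 ≤ n)
    (Ω : Type) [MeasurableSpace Ω] (μ : Measure Ω) [IsProbabilityMeasure μ]
    (W : Ω → Fin n → Fin n → ℝ) (hWmeas : Measurable W)
    (hWint : ∀ i j, Integrable (fun ω => W ω i j) μ)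
    (hWsym : ∀ᵐ ω ∂μ, (Matrix.of (W ω)).IsSymm)
    (hWds : ∀ᵐ ω ∂μ, IsDoublyStochastic (Matrix.of (W ω)))
    (hWdiag : ∀ i, ∀ᵐ ω ∂μ, 0 < W ω i i)
    (hEW : ‖Matrix.toEuclideanCLM (𝕜 := ℝ) (n := Fin n)
        ((Matrix.of fun i j => ∫ ω, W ω i j ∂μ) -
          (n : ℝ)⁻¹ • Matrix.of (fun _ _ => (1 : ℝ)))‖ < 1) :
    ‖Matrix.toEuclideanCLM (𝕜 := ℝ) (n := Fin n)
        ((Matrix.of fun i j => ∫ ω, (Matrix.of (W ω) * Matrix.of (W ω)) i j ∂μ) -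
          (n : ℝ)⁻¹ • Matrix.of (fun _ _ => (1 : ℝ)))‖ < 1 := by
  classical
  rw [show ((n : ℝ)⁻¹ • Matrix.of (fun _ _ => (1:ℝ)) : Matrix (Fin n) (Fin n) ℝ)
      = Jmat n from rfl] at hEW ⊢
  set F2 : Ω → Matrix (Fin n) (Fin n) ℝ := fun ω => Matrix.of (W ω) * Matrix.of (W ω) with hF2def
  set M2 : Matrix (Fin n) (Fin n) ℝ := Matrix.of fun i j => ∫ ω, F2 ω i j ∂μ with hM2def
  set Eb : Matrix (Fin n) (Fin n) ℝ := Matrix.of fun i j => ∫ ω, W ω i j ∂μ with hEbdef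
  set T : EuclideanSpace ℝ (Fin n) →L[ℝ] EuclideanSpace ℝ (Fin n) :=
    Matrix.toEuclideanCLM (𝕜 := ℝ) (M2 - Jmat n) with hTdef
  by_contra hcon
  push_neg at hcon
  -- entrywise measurability
  have hmW : ∀ i j, Measurable (fun ω => W ω i j) := fun i j =>
    (measurable_pi_apply j).comp ((measurable_pi_apply i).comp hWmeas)
  -- the good event
  have hG : ∀ᵐ ω ∂μ, (Matrix.of (W ω)).IsSymm ∧ IsDoublyStochastic (Matrix.of (W ω))
      ∧ ∀ i, 0 < W ω i i := hWsym.and (hWds.and (ae_all_iff.mpr hWdiag))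
  have hb01 : ∀ᵐ ω ∂μ, ∀ i j, 0 ≤ W ω i j ∧ W ω i j ≤ 1 := by
    filter_upwards [hWds] with ω hds i j
    refine ⟨hds.1 i j, ?_⟩
    calc W ω i j ≤ ∑ k, W ω i k :=
          Finset.single_le_sum (fun k _ => hds.1 i k) (Finset.mem_univ j)
      _ = 1 := hds.2.1 i
  have hintPair : ∀ i k j, Integrable (fun ω => W ω i k * W ω k j) μ := by
    intro i k j
    refine MeasureTheory.Integrable.mono' (integrable_const 1)
      (((hmW i k).mul (hmW k j)).aestronglyMeasurable) ?_
    filter_upwards [hb01] with ω hb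
    have h1 := hb i k; have h2 := hb k j
    rw [Real.norm_eq_abs, abs_mul, abs_of_nonneg h1.1, abs_of_nonneg h2.1]
    nlinarith [h1.1, h1.2, h2.1, h2.2]
  have hintW2 : ∀ i j, Integrable (fun ω => F2 ω i j) μ := by
    intro i j
    simp only [hF2def, Matrix.mul_apply, Matrix.of_apply]
    exact MeasureTheory.integrable_finset_sum _ fun k _ => hintPair i k j
  -- the bilinear integrand
  set g : EuclideanSpace ℝ (Fin n) → EuclideanSpace ℝ (Fin n) → Ω → ℝ := fun x y ω =>
    ((Matrix.of (W ω) - Jmat n) *ᵥ x) ⬝ᵥ ((Matrix.of (W ω) - Jmat n) *ᵥ y) with hgdef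
  have hga : ∀ x y : EuclideanSpace ℝ (Fin n), ∀ᵐ ω ∂μ,
      g x y ω = ((F2 ω) *ᵥ (x : Fin n → ℝ)) ⬝ᵥ (y : Fin n → ℝ)
        - (Jmat n *ᵥ (x : Fin n → ℝ)) ⬝ᵥ (y : Fin n → ℝ) := by
    intro x y
    filter_upwards [hG] with ω hGω
    obtain ⟨hsym, hds, hdiag⟩ := hGω
    have hAt : (Matrix.of (W ω) - Jmat n)ᵀ = Matrix.of (W ω) - Jmat n := by
      rw [Matrix.transpose_sub, Jmat_symm, hsym.eq]
    show ((Matrix.of (W ω) - Jmat n) *ᵥ x) ⬝ᵥ ((Matrix.of (W ω) - Jmat n) *ᵥ y) = _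
    rw [dot_sym _ hAt, A_sq hn _ hds, Matrix.sub_mulVec, sub_dotProduct]
  have hgInt : ∀ x y : EuclideanSpace ℝ (Fin n), Integrable (g x y) μ := by
    intro x y
    have hI : Integrable (fun ω => ((F2 ω) *ᵥ (x : Fin n → ℝ)) ⬝ᵥ (y : Fin n → ℝ)
        - (Jmat n *ᵥ (x : Fin n → ℝ)) ⬝ᵥ (y : Fin n → ℝ)) μ :=
      (integrable_mulVec_dot μ F2 hintW2 x y).sub (integrable_const _)
    exact hI.congr ((hga x y).mono fun ω h => h.symm)
  -- key identity
  have hkey : ∀ x y : EuclideanSpace ℝ (Fin n),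
      (inner ℝ (T x) y : ℝ) = ∫ ω, g x y ω ∂μ := by
    intro x y
    rw [hTdef, clm_inner, Matrix.sub_mulVec, sub_dotProduct]
    have h1 := integral_mulVec_dot μ F2 hintW2 (x : Fin n → ℝ) (y : Fin n → ℝ)
    rw [← hM2def] at h1
    rw [← h1, MeasureTheory.integral_congr_ae (hga x y),
      MeasureTheory.integral_sub (integrable_mulVec_dot μ F2 hintW2 _ _) (integrable_const _),
      integral_const]
    simp [measure_univ]
  -- a.e. bound on g
  have habs : ∀ x y : EuclideanSpace ℝ (Fin n), ∀ᵐ ω ∂μ, |g x y ω| ≤ ‖x‖ * ‖y‖ := by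
    intro x y
    filter_upwards [hG] with ω hGω
    obtain ⟨hsym, hds, hdiag⟩ := hGω
    have h1 : g x y ω = (inner ℝ (Matrix.toEuclideanCLM (𝕜 := ℝ) (Matrix.of (W ω) - Jmat n) x)
        (Matrix.toEuclideanCLM (𝕜 := ℝ) (Matrix.of (W ω) - Jmat n) y) : ℝ) := by
      rw [inner_eq_dot]; rfl
    rw [h1]
    calc |(inner ℝ (Matrix.toEuclideanCLM (𝕜 := ℝ) (Matrix.of (W ω) - Jmat n) x)
        (Matrix.toEuclideanCLM (𝕜 := ℝ) (Matrix.of (W ω) - Jmat n) y) : ℝ)|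
        ≤ ‖Matrix.toEuclideanCLM (𝕜 := ℝ) (Matrix.of (W ω) - Jmat n) x‖ *
          ‖Matrix.toEuclideanCLM (𝕜 := ℝ) (Matrix.of (W ω) - Jmat n) y‖ :=
          abs_real_inner_le_norm _ _
      _ ≤ ‖x‖ * ‖y‖ := by
          exact mul_le_mul (A_clm_norm_le hn _ hds x) (A_clm_norm_le hn _ hds y)
            (norm_nonneg _) (norm_nonneg _)
  -- T is a contraction
  have hTle : ∀ x : EuclideanSpace ℝ (Fin n), ‖T x‖ ≤ ‖x‖ := by
    intro x
    have h0 : ‖T x‖ ^ 2 = ∫ ω, g x (T x) ω ∂μ := by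
      rw [← real_inner_self_eq_norm_sq]
      exact hkey x (T x)
    have h1 : ∫ ω, g x (T x) ω ∂μ ≤ ‖x‖ * ‖T x‖ := by
      calc ∫ ω, g x (T x) ω ∂μ ≤ ∫ _ω, ‖x‖ * ‖T x‖ ∂μ :=
            integral_mono_ae (hgInt x (T x)) (integrable_const _)
              ((habs x (T x)).mono fun ω h => (le_abs_self _).trans h)
        _ = ‖x‖ * ‖T x‖ := by simp [measure_univ]
    by_cases hz : ‖T x‖ = 0
    · rw [hz]; exact norm_nonneg x
    · have hpos : 0 < ‖T x‖ := lt_of_le_of_ne (norm_nonneg _) (Ne.symm hz)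
      nlinarith [h0 ▸ h1]
  have hTnorm : ‖T‖ ≤ 1 :=
    T.opNorm_le_bound zero_le_one fun x => by rw [one_mul]; exact hTle x
  -- a maximizer on the sphere
  obtain ⟨x₀, hx₀mem, hmax⟩ := (isCompact_sphere (0 : EuclideanSpace ℝ (Fin n)) 1).exists_isMaxOn
    ⟨EuclideanSpace.single ⟨0, by omega⟩ (1:ℝ), by
      simp [mem_sphere_zero_iff_norm, EuclideanSpace.norm_single]⟩
    (T.continuous.norm.continuousOn)
  have hx₀ : ‖x₀‖ = 1 := mem_sphere_zero_iff_norm.mp hx₀mem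
  have hTx₀ : ‖T x₀‖ = 1 := by
    refine le_antisymm (by calc ‖T x₀‖ ≤ ‖x₀‖ := hTle x₀
                            _ = 1 := hx₀) ?_
    have hle : ‖T‖ ≤ ‖T x₀‖ := by
      refine T.opNorm_le_bound (norm_nonneg _) fun y => ?_
      rcases eq_or_ne y 0 with rfl | hy
      · simp
      · have hyn : ‖y‖ ≠ 0 := norm_ne_zero_iff.mpr hy
        have hypos : 0 < ‖y‖ := lt_of_le_of_ne (norm_nonneg _) (Ne.symm hyn)
        have hz : (‖y‖⁻¹ • y) ∈ Metric.sphere (0 : EuclideanSpace ℝ (Fin n)) 1 := by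
          simp [mem_sphere_zero_iff_norm, norm_smul, abs_of_nonneg (inv_nonneg.mpr (norm_nonneg y)),
            inv_mul_cancel₀ hyn]
        have hm := hmax hz
        have hmm : ‖y‖⁻¹ * ‖T y‖ ≤ ‖T x₀‖ := by
          have he : ‖T (‖y‖⁻¹ • y)‖ = ‖y‖⁻¹ * ‖T y‖ := by
            rw [T.map_smul, norm_smul, Real.norm_eq_abs,
              abs_of_nonneg (inv_nonneg.mpr (norm_nonneg y))]
          rw [← he]
          exact hm
        calc ‖T y‖ = ‖y‖ * (‖y‖⁻¹ * ‖T y‖) := by field_simp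
          _ ≤ ‖y‖ * ‖T x₀‖ := mul_le_mul_of_nonneg_left hmm (norm_nonneg y)
          _ = ‖T x₀‖ * ‖y‖ := mul_comm _ _
    linarith [hcon.trans hle]
  -- T is self-adjoint
  have hM2symm : (M2 - Jmat n)ᵀ = M2 - Jmat n := by
    rw [Matrix.transpose_sub, Jmat_symm]
    congr 1
    ext i j
    show (∫ ω, F2 ω j i ∂μ) = ∫ ω, F2 ω i j ∂μ
    refine MeasureTheory.integral_congr_ae ?_
    filter_upwards [hWsym] with ω hsym
    show (Matrix.of (W ω) * Matrix.of (W ω)) j i = (Matrix.of (W ω) * Matrix.of (W ω)) i j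
    conv_lhs => rw [show (Matrix.of (W ω) * Matrix.of (W ω)) j i
      = (Matrix.of (W ω) * Matrix.of (W ω))ᵀ i j from rfl]
    rw [Matrix.transpose_mul, hsym.eq]
  have hsymT : ∀ x y : EuclideanSpace ℝ (Fin n), (inner ℝ (T x) y : ℝ) = inner ℝ x (T y) :=
    fun x y => symm_inner _ hM2symm x y
  have hT2 : T (T x₀) = x₀ := sq_fix T hsymT hTle x₀ (by rw [hTx₀, hx₀])
  -- build the eigenvector u
  set w : EuclideanSpace ℝ (Fin n) := x₀ + T x₀ with hwdef
  have hTw : T w = w := by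
    rw [hwdef, map_add, hT2, add_comm]
  have hPSD : (0:ℝ) ≤ inner ℝ (T x₀) x₀ := by
    rw [hkey]
    refine integral_nonneg fun ω => ?_
    exact Finset.sum_nonneg fun i _ => mul_self_nonneg _
  have hw2 : (2:ℝ) ≤ ‖w‖ ^ 2 := by
    rw [hwdef, norm_add_sq_real, hx₀, hTx₀, real_inner_comm]
    nlinarith [hPSD]
  have hwpos : 0 < ‖w‖ := by nlinarith [norm_nonneg w]
  set u : EuclideanSpace ℝ (Fin n) := ‖w‖⁻¹ • w with hudef
  have hTu : T u = u := by rw [hudef, T.map_smul, hTw]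
  have hu1 : ‖u‖ = 1 := by
    rw [hudef, norm_smul, Real.norm_eq_abs, abs_of_nonneg (inv_nonneg.mpr (norm_nonneg w)),
      inv_mul_cancel₀ (ne_of_gt hwpos)]
  have hgu : ∫ ω, g u u ω ∂μ = 1 := by
    rw [← hkey, hTu, real_inner_self_eq_norm_sq, hu1, one_pow]
  -- a.e. g u u = 1
  have h1ae : ∀ᵐ ω ∂μ, g u u ω = 1 := by
    have hle1 : ∀ᵐ ω ∂μ, g u u ω ≤ 1 := by
      filter_upwards [habs u u] with ω h
      calc g u u ω ≤ |g u u ω| := le_abs_self _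
        _ ≤ ‖u‖ * ‖u‖ := h
        _ = 1 := by rw [hu1]; ring
    have hnn : 0 ≤ᵐ[μ] (fun ω => 1 - g u u ω) := hle1.mono fun ω h => by simp; linarith
    have hintd : Integrable (fun ω => 1 - g u u ω) μ := (integrable_const 1).sub (hgInt u u)
    have hz : ∫ ω, (1 - g u u ω) ∂μ = 0 := by
      rw [MeasureTheory.integral_sub (integrable_const 1) (hgInt u u), hgu]
      simp [measure_univ]
    have := (MeasureTheory.integral_eq_zero_iff_of_nonneg_ae hnn hintd).mp hz
    filter_upwards [this] with ω h
    have : (1:ℝ) - g u u ω = 0 := h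
    linarith
  -- J u = 0
  set uf : Fin n → ℝ := fun i => u i with hufdef
  have hMu : (M2 - Jmat n) *ᵥ uf = uf := by
    funext i
    exact congrFun (congrArg (fun (z : EuclideanSpace ℝ (Fin n)) => (fun i => z i)) hTu) i
  have hcolM2 : ∀ j, ∑ i, M2 i j = 1 := by
    intro j
    have h1 : ∑ i, M2 i j = ∫ ω, ∑ i, F2 ω i j ∂μ := by
      rw [MeasureTheory.integral_finset_sum _ (fun i _ => hintW2 i j)]
      rfl
    rw [h1]
    have h2 : ∀ᵐ ω ∂μ, ∑ i, F2 ω i j = 1 := by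
      filter_upwards [hWds] with ω hds
      exact colsum_sq _ hds j
    rw [MeasureTheory.integral_congr_ae h2]
    simp [measure_univ]
  have hJu : Jmat n *ᵥ uf = 0 := by
    calc Jmat n *ᵥ uf = Jmat n *ᵥ ((M2 - Jmat n) *ᵥ uf) := by rw [hMu]
      _ = (Jmat n * (M2 - Jmat n)) *ᵥ uf := by rw [Matrix.mulVec_mulVec]
      _ = 0 := by rw [Jmat_mul_A M2 hcolM2, Matrix.zero_mulVec]
  -- a.e. fixed point of W - J
  have hfix : ∀ᵐ ω ∂μ, (Matrix.of (W ω) - Jmat n) *ᵥ uf = uf := by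
    filter_upwards [hG, h1ae] with ω hGω h1
    obtain ⟨hsym, hds, hdiag⟩ := hGω
    have hnormω : ‖Matrix.toEuclideanCLM (𝕜 := ℝ) (Matrix.of (W ω) - Jmat n) u‖ = ‖u‖ := by
      rw [hu1]
      have hsq : ‖Matrix.toEuclideanCLM (𝕜 := ℝ) (Matrix.of (W ω) - Jmat n) u‖ ^ 2 = 1 := by
        rw [clm_norm_sq]
        have : g u u ω = ∑ i, ((Matrix.of (W ω) - Jmat n) *ᵥ (u : Fin n → ℝ)) i ^ 2 := by
          show ((Matrix.of (W ω) - Jmat n) *ᵥ u) ⬝ᵥ ((Matrix.of (W ω) - Jmat n) *ᵥ u) = _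
          simp [dotProduct, pow_two]
        rw [← this, h1]
      set a : ℝ := ‖Matrix.toEuclideanCLM (𝕜 := ℝ) (Matrix.of (W ω) - Jmat n) u‖ with ha
      have hnn : 0 ≤ a := ha ▸ norm_nonneg _
      have hfac : (a - 1) * (a + 1) = 0 := by linear_combination hsq
      rcases mul_eq_zero.mp hfac with h | h
      · linarith
      · linarith
    exact fix_of_norm_eq hn _ hsym hds (fun i => hdiag i) u hJu hnormω
  -- integrate to get fixed point of Eb - J
  have hfinal : ∀ y : Fin n → ℝ, ((Eb - Jmat n) *ᵥ uf) ⬝ᵥ y = uf ⬝ᵥ y := by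
    intro y
    have h1 := integral_mulVec_dot μ (fun ω => Matrix.of (W ω))
      (fun i j => hWint i j) uf y
    simp only [Matrix.of_apply] at h1
    rw [← hEbdef] at h1
    have h2 : ∀ᵐ ω ∂μ, ((Matrix.of (W ω)) *ᵥ uf) ⬝ᵥ y = uf ⬝ᵥ y + (Jmat n *ᵥ uf) ⬝ᵥ y := by
      filter_upwards [hfix] with ω hf
      have h3 : Matrix.of (W ω) *ᵥ uf = uf + Jmat n *ᵥ uf := by
        rw [Matrix.sub_mulVec] at hf
        exact sub_eq_iff_eq_add.mp hf
      rw [h3, add_dotProduct]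
    rw [MeasureTheory.integral_congr_ae h2, integral_const] at h1
    simp only [measure_univ, ENNReal.toReal_one, probReal_univ, one_smul] at h1
    rw [Matrix.sub_mulVec, sub_dotProduct, ← h1]
    ring
  have huEq : (Eb - Jmat n) *ᵥ uf = uf := by
    have h := hfinal (((Eb - Jmat n) *ᵥ uf) - uf)
    have h0 : (((Eb - Jmat n) *ᵥ uf) - uf) ⬝ᵥ (((Eb - Jmat n) *ᵥ uf) - uf) = 0 := by
      rw [sub_dotProduct, h]
      ring
    exact sub_eq_zero.mp (dotProduct_self_eq_zero.mp h0)
  have hTu' : Matrix.toEuclideanCLM (𝕜 := ℝ) (Eb - Jmat n) u = u := by ext i; exact congrFun huEq i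
  have hge : (1:ℝ) ≤ ‖Matrix.toEuclideanCLM (𝕜 := ℝ) (Eb - Jmat n)‖ := by
    have h := (Matrix.toEuclideanCLM (𝕜 := ℝ) (Eb - Jmat n)).le_opNorm u
    rw [hTu', hu1] at h
    linarith
  linarith
end
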